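/- For symmetric n×n real matrices B_1,...,B_p (p ≥ 1), ∑_{r,s=1}^p ‖[B_r, B_s]‖_F^2 ≤ n · ∑_{r,s=1}^p (tr(B_r B_s))^2, where [B_r,B_s] = B_r B_s − B_s B_r and ‖·‖_F denotes the Frobenius norm. -/

import Mathlib

open Matrix Finset

namespace ItohAux

variable {n : ℕ}

/-- Frobenius inner product. -/
def ip (X Y : Matrix (Fin n) (Fin n) ℝ) : ℝ := ∑ i, ∑ j, X i j * Y i j

lemma ip_comm (X Y : Matrix (Fin n) (Fin n) ℝ) : ip X Y = ip Y X := by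
  simp [ip, mul_comm]

lemma ip_self_nonneg (X : Matrix (Fin n) (Fin n) ℝ) : 0 ≤ ip X X :=
  Finset.sum_nonneg fun i _ => Finset.sum_nonneg fun j _ => mul_self_nonneg _

lemma eq_zero_of_ip_self_eq_zero {X : Matrix (Fin n) (Fin n) ℝ} (h : ip X X = 0) : X = 0 := by
  ext i j
  have h1 : ∀ i ∈ (univ : Finset (Fin n)), (0:ℝ) ≤ ∑ j, X i j * X i j :=
    fun i _ => Finset.sum_nonneg fun j _ => mul_self_nonneg _
  have h2 := (Finset.sum_eq_zero_iff_of_nonneg h1).mp h i (mem_univ i)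
  have h3 : ∀ j ∈ (univ : Finset (Fin n)), (0:ℝ) ≤ X i j * X i j :=
    fun j _ => mul_self_nonneg _
  have h4 := (Finset.sum_eq_zero_iff_of_nonneg h3).mp h2 j (mem_univ j)
  simpa [mul_self_eq_zero] using h4

lemma trace_mul_transpose (X Y : Matrix (Fin n) (Fin n) ℝ) :
    trace (X * Yᵀ) = ip X Y := by
  simp [ip, Matrix.trace, Matrix.diag, Matrix.mul_apply]

lemma trace_eq_ip (X Y : Matrix (Fin n) (Fin n) ℝ) (hY : Yᵀ = Y) :
    trace (X * Y) = ip X Y := by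
  rw [← trace_mul_transpose, hY]

lemma ip_sub_right (X Y Z : Matrix (Fin n) (Fin n) ℝ) : ip X (Y - Z) = ip X Y - ip X Z := by
  simp [ip, Matrix.sub_apply, mul_sub, Finset.sum_sub_distrib]

lemma ip_add_right (X Y Z : Matrix (Fin n) (Fin n) ℝ) : ip X (Y + Z) = ip X Y + ip X Z := by
  simp [ip, Matrix.add_apply, mul_add, Finset.sum_add_distrib]

lemma ip_smul_right (c : ℝ) (X Y : Matrix (Fin n) (Fin n) ℝ) : ip X (c • Y) = c * ip X Y := by
  simp only [ip, Matrix.smul_apply, smul_eq_mul, Finset.mul_sum]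
  exact Finset.sum_congr rfl fun i _ => Finset.sum_congr rfl fun j _ => by ring

lemma ip_smul_left (c : ℝ) (X Y : Matrix (Fin n) (Fin n) ℝ) : ip (c • X) Y = c * ip X Y := by
  rw [ip_comm, ip_smul_right, ip_comm]

lemma ip_sub_left (X Y Z : Matrix (Fin n) (Fin n) ℝ) : ip (X - Y) Z = ip X Z - ip Y Z := by
  rw [ip_comm, ip_sub_right, ip_comm Z X, ip_comm Z Y]

lemma ip_sum_right {α : Type*} (s : Finset α) (X : Matrix (Fin n) (Fin n) ℝ)
    (f : α → Matrix (Fin n) (Fin n) ℝ) : ip X (∑ b ∈ s, f b) = ∑ b ∈ s, ip X (f b) := by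
  have h : ∀ i j, X i j * (∑ b ∈ s, f b) i j = ∑ b ∈ s, X i j * f b i j := by
    intro i j; rw [Matrix.sum_apply, Finset.mul_sum]
  simp only [ip]
  simp_rw [h]
  calc (∑ i, ∑ j, ∑ b ∈ s, X i j * f b i j)
      = ∑ i, ∑ b ∈ s, ∑ j, X i j * f b i j :=
        Finset.sum_congr rfl fun i _ => Finset.sum_comm
    _ = ∑ b ∈ s, ∑ i, ∑ j, X i j * f b i j := Finset.sum_comm

lemma bessel {α : Type*} [DecidableEq α] (s : Finset α) (u : α → Matrix (Fin n) (Fin n) ℝ)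
    (hon : ∀ a ∈ s, ∀ b ∈ s, ip (u a) (u b) = if a = b then 1 else 0)
    (N : Matrix (Fin n) (Fin n) ℝ) :
    ∑ b ∈ s, (ip (u b) N) ^ 2 ≤ ip N N := by
  set T : Matrix (Fin n) (Fin n) ℝ := ∑ b ∈ s, ip (u b) N • u b with hT
  have hNT : ip N T = ∑ b ∈ s, (ip (u b) N) ^ 2 := by
    rw [hT, ip_sum_right]
    refine Finset.sum_congr rfl fun b hb => ?_
    rw [ip_smul_right, ip_comm N (u b)]; ring
  have hTub : ∀ b ∈ s, ip T (u b) = ip (u b) N := by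
    intro b hb
    rw [ip_comm, hT, ip_sum_right]
    have h1 : ∀ a ∈ s, ip (u b) (ip (u a) N • u a) = if a = b then ip (u b) N else 0 := by
      intro a ha
      rw [ip_smul_right, hon b hb a ha]
      rcases eq_or_ne a b with h | h
      · subst h; simp
      · simp [h, h.symm]
    rw [Finset.sum_congr rfl h1, Finset.sum_ite_eq' s b]
    simp [hb]
  have hTT : ip T T = ∑ b ∈ s, (ip (u b) N) ^ 2 := by
    conv_lhs => rw [hT, ip_sum_right]
    refine Finset.sum_congr rfl fun b hb => ?_
    rw [ip_smul_right, hTub b hb]; ring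
  have hpos := ip_self_nonneg (N - T)
  have hexp : ip (N - T) (N - T) = ip N N - ∑ b ∈ s, (ip (u b) N) ^ 2 := by
    rw [ip_sub_left, ip_sub_right, ip_sub_right, hNT, hTT, ip_comm T N, hNT]
    ring
  linarith [hexp ▸ hpos]

section PartB
variable {n : ℕ}

def P1 (A : Matrix (Fin n) (Fin n) ℝ) (k l : Fin n) : Matrix (Fin n) (Fin n) ℝ :=
  Matrix.of fun i j => if j = l then A k i else 0

def P2 (A : Matrix (Fin n) (Fin n) ℝ) (k l : Fin n) : Matrix (Fin n) (Fin n) ℝ :=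
  Matrix.of fun i j => if i = k then A j l else 0

def P3 (A : Matrix (Fin n) (Fin n) ℝ) (k l : Fin n) : Matrix (Fin n) (Fin n) ℝ :=
  Matrix.of fun i j => if i = l then A k j else 0

def P4 (A : Matrix (Fin n) (Fin n) ℝ) (k l : Fin n) : Matrix (Fin n) (Fin n) ℝ :=
  Matrix.of fun i j => if j = k then A i l else 0

def Nm (A : Matrix (Fin n) (Fin n) ℝ) (k l : Fin n) : Matrix (Fin n) (Fin n) ℝ :=
  P1 A k l - P2 A k l + P3 A k l - P4 A k l

variable (A u : Matrix (Fin n) (Fin n) ℝ) (k l : Fin n)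

lemma ip_P1 : ip u (P1 A k l) = (A * u) k l := by
  simp [ip, P1, Matrix.mul_apply, mul_ite, mul_zero, mul_comm]

lemma ip_P2 : ip u (P2 A k l) = (u * A) k l := by
  simp [ip, P2, Matrix.mul_apply, mul_ite, mul_zero]

lemma ip_P3 (hu : uᵀ = u) : ip u (P3 A k l) = (A * u) k l := by
  have hu' : ∀ i j, u i j = u j i := fun i j => by
    conv_lhs => rw [← hu]
    rfl
  simp only [ip, P3, Matrix.of_apply, mul_ite, mul_zero]
  simp [Matrix.mul_apply, hu' l, mul_comm]

lemma ip_P4 (hu : uᵀ = u) : ip u (P4 A k l) = (u * A) k l := by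
  have hu' : ∀ i j, u i j = u j i := fun i j => by
    conv_lhs => rw [← hu]
    rfl
  simp only [ip, P4, Matrix.of_apply, mul_ite, mul_zero]
  simp [Matrix.mul_apply, fun i => hu' i k, mul_comm]

lemma ip_pair (hu : uᵀ = u) : ip u (Nm A k l) = 2 * ((A * u - u * A) k l) := by
  rw [Nm, ip_sub_right, ip_add_right, ip_sub_right, ip_P1, ip_P2, ip_P3 A u k l hu,
    ip_P4 A u k l hu]
  simp [Matrix.sub_apply]
  ring

lemma ip_P1_P1 : ip (P1 A k l) (P1 A k l) = ∑ i, A k i * A k i := by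
  simp [ip, P1, ite_mul, mul_ite, mul_zero, zero_mul]

lemma ip_P2_P2 : ip (P2 A k l) (P2 A k l) = ∑ j, A j l * A j l := by
  simp [ip, P2, ite_mul, mul_ite, mul_zero, zero_mul]

lemma ip_P3_P3 : ip (P3 A k l) (P3 A k l) = ∑ j, A k j * A k j := by
  simp [ip, P3, ite_mul, mul_ite, mul_zero, zero_mul]

lemma ip_P4_P4 : ip (P4 A k l) (P4 A k l) = ∑ i, A i l * A i l := by
  simp [ip, P4, ite_mul, mul_ite, mul_zero, zero_mul]

lemma ip_P1_P2 : ip (P1 A k l) (P2 A k l) = A k k * A l l := by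
  simp [ip, P1, P2, ite_mul, mul_ite, mul_zero, zero_mul]

lemma ip_P1_P3 : ip (P1 A k l) (P3 A k l) = A k l * A k l := by
  simp [ip, P1, P3, ite_mul, mul_ite, mul_zero, zero_mul]

lemma ip_P1_P4 : ip (P1 A k l) (P4 A k l) = if k = l then ∑ i, A k i * A i l else 0 := by
  simp [ip, P1, P4, ite_mul, mul_ite, mul_zero, zero_mul]

lemma ip_P2_P3 : ip (P2 A k l) (P3 A k l) = if l = k then ∑ j, A j l * A k j else 0 := by
  simp [ip, P2, P3, ite_mul, mul_ite, mul_zero, zero_mul]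

lemma ip_P2_P4 : ip (P2 A k l) (P4 A k l) = A k l * A k l := by
  simp [ip, P2, P4, ite_mul, mul_ite, mul_zero, zero_mul]

lemma ip_P3_P4 : ip (P3 A k l) (P4 A k l) = A k k * A l l := by
  simp [ip, P3, P4, ite_mul, mul_ite, mul_zero, zero_mul]

lemma ip_add_left (X Y Z : Matrix (Fin n) (Fin n) ℝ) : ip (X + Y) Z = ip X Z + ip Y Z := by
  rw [ip_comm, ip_add_right, ip_comm Z X, ip_comm Z Y]

lemma nsq_Nm : ip (Nm A k l) (Nm A k l) =
    (∑ i, A k i * A k i) + (∑ j, A j l * A j l) + (∑ j, A k j * A k j) + (∑ i, A i l * A i l)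
      + 4 * (A k l * A k l) - 4 * (A k k * A l l)
      - 2 * (if k = l then ∑ i, A k i * A i l else 0)
      - 2 * (if l = k then ∑ j, A j l * A k j else 0) := by
  have c21 : ip (P2 A k l) (P1 A k l) = A k k * A l l := by rw [ip_comm]; exact ip_P1_P2 A k l
  have c31 : ip (P3 A k l) (P1 A k l) = A k l * A k l := by rw [ip_comm]; exact ip_P1_P3 A k l
  have c41 : ip (P4 A k l) (P1 A k l) = if k = l then ∑ i, A k i * A i l else 0 := by
    rw [ip_comm]; exact ip_P1_P4 A k l
  have c32 : ip (P3 A k l) (P2 A k l) = if l = k then ∑ j, A j l * A k j else 0 := by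
    rw [ip_comm]; exact ip_P2_P3 A k l
  have c42 : ip (P4 A k l) (P2 A k l) = A k l * A k l := by rw [ip_comm]; exact ip_P2_P4 A k l
  have c43 : ip (P4 A k l) (P3 A k l) = A k k * A l l := by rw [ip_comm]; exact ip_P3_P4 A k l
  simp only [Nm, ip_sub_left, ip_add_left, ip_sub_right, ip_add_right,
    ip_P1_P1, ip_P2_P2, ip_P3_P3, ip_P4_P4, ip_P1_P2, ip_P1_P3, ip_P1_P4, ip_P2_P3,
    ip_P2_P4, ip_P3_P4, c21, c31, c41, c32, c42, c43]
  ring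

lemma sum_nsq_Nm (hA : Aᵀ = A) :
    ∑ k, ∑ l, ip (Nm A k l) (Nm A k l) = 4 * n * ip A A - 4 * (∑ k, A k k) ^ 2 := by
  have hA' : ∀ i j, A i j = A j i := fun i j => by
    conv_lhs => rw [← hA]
    rfl
  have c1 : ∑ k : Fin n, ∑ _l : Fin n, (∑ i, A k i * A k i) = (n : ℝ) * ip A A := by
    simp only [Finset.sum_const, Finset.card_univ, Fintype.card_fin, nsmul_eq_mul, ip]
    rw [← Finset.mul_sum]
  have c2 : ∑ _k : Fin n, ∑ l : Fin n, (∑ j, A j l * A j l) = (n : ℝ) * ip A A := by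
    rw [Finset.sum_const, Finset.card_univ, Fintype.card_fin, nsmul_eq_mul]
    rw [Finset.sum_comm]
    rfl
  have c3 : ∑ k : Fin n, ∑ _l : Fin n, (∑ j, A k j * A k j) = (n : ℝ) * ip A A := c1
  have c4 : ∑ _k : Fin n, ∑ l : Fin n, (∑ i, A i l * A i l) = (n : ℝ) * ip A A := c2
  have c5 : ∑ k : Fin n, ∑ l : Fin n, 4 * (A k l * A k l) = 4 * ip A A := by
    simp only [ip, ← Finset.mul_sum]
  have c6 : ∑ k : Fin n, ∑ l : Fin n, 4 * (A k k * A l l) = 4 * (∑ k, A k k) ^ 2 := by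
    have h := Finset.sum_mul_sum (Finset.univ : Finset (Fin n)) (Finset.univ : Finset (Fin n))
      (fun k => A k k) (fun l => A l l)
    calc ∑ k : Fin n, ∑ l : Fin n, 4 * (A k k * A l l)
        = 4 * ∑ k : Fin n, ∑ l : Fin n, A k k * A l l := by
          rw [Finset.mul_sum]
          exact Finset.sum_congr rfl fun k _ => by rw [Finset.mul_sum]
      _ = 4 * ((∑ k : Fin n, A k k) * (∑ l : Fin n, A l l)) := by rw [← h]
      _ = 4 * (∑ k : Fin n, A k k) ^ 2 := by ring
  have c7 : ∑ k : Fin n, ∑ l : Fin n, 2 * (if k = l then ∑ i, A k i * A i l else 0)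
      = 2 * ip A A := by
    simp only [← Finset.mul_sum]
    congr 1
    have : ∀ k : Fin n, ∑ l : Fin n, (if k = l then ∑ i, A k i * A i l else 0)
        = ∑ i, A k i * A i k := by
      intro k; rw [Finset.sum_ite_eq]; simp
    rw [Finset.sum_congr rfl fun k _ => this k]
    simp only [ip]
    exact Finset.sum_congr rfl fun k _ => Finset.sum_congr rfl fun i _ => by
      rw [hA' i k]
  have c8 : ∑ k : Fin n, ∑ l : Fin n, 2 * (if l = k then ∑ j, A j l * A k j else 0)
      = 2 * ip A A := by
    simp only [← Finset.mul_sum]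
    congr 1
    have : ∀ k : Fin n, ∑ l : Fin n, (if l = k then ∑ j, A j l * A k j else 0)
        = ∑ j, A j k * A k j := by
      intro k; rw [Finset.sum_ite_eq']; simp
    rw [Finset.sum_congr rfl fun k _ => this k]
    simp only [ip]
    rw [Finset.sum_comm]
    exact Finset.sum_congr rfl fun j _ => Finset.sum_congr rfl fun k _ => by
      rw [hA' j k]
  simp only [nsq_Nm, Finset.sum_add_distrib, Finset.sum_sub_distrib]
  rw [c1, c2, c5, c6, c7, c8]
  ring

lemma row_bound {α : Type*} [DecidableEq α] (s : Finset α) (u : α → Matrix (Fin n) (Fin n) ℝ)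
    (hA : Aᵀ = A) (hu : ∀ a ∈ s, (u a)ᵀ = u a)
    (hon : ∀ a ∈ s, ∀ b ∈ s, ip (u a) (u b) = if a = b then 1 else 0) :
    ∑ b ∈ s, ip (A * u b - u b * A) (A * u b - u b * A) ≤ n * ip A A := by
  have h4 : ∀ b ∈ s, 4 * ip (A * u b - u b * A) (A * u b - u b * A)
      = ∑ k, ∑ l, (ip (u b) (Nm A k l)) ^ 2 := by
    intro b hb
    have : ∀ k l : Fin n, (ip (u b) (Nm A k l)) ^ 2
        = 4 * ((A * u b - u b * A) k l * (A * u b - u b * A) k l) := by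
      intro k l; rw [ip_pair A (u b) k l (hu b hb)]; ring
    simp_rw [this]
    simp only [← Finset.mul_sum]
    rfl
  have hswap : ∑ b ∈ s, ∑ k, ∑ l, (ip (u b) (Nm A k l)) ^ 2
      = ∑ k, ∑ l, ∑ b ∈ s, (ip (u b) (Nm A k l)) ^ 2 := by
    rw [Finset.sum_comm]
    exact Finset.sum_congr rfl fun k _ => Finset.sum_comm
  have hb4 : ∑ b ∈ s, 4 * ip (A * u b - u b * A) (A * u b - u b * A)
      = ∑ k, ∑ l, ∑ b ∈ s, (ip (u b) (Nm A k l)) ^ 2 := by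
    rw [Finset.sum_congr rfl h4, hswap]
  have hbes : ∑ k, ∑ l, ∑ b ∈ s, (ip (u b) (Nm A k l)) ^ 2
      ≤ ∑ k, ∑ l, ip (Nm A k l) (Nm A k l) := by
    refine Finset.sum_le_sum fun k _ => Finset.sum_le_sum fun l _ => ?_
    exact bessel s u hon (Nm A k l)
  rw [sum_nsq_Nm A hA] at hbes
  have htr : (0:ℝ) ≤ (∑ k, A k k) ^ 2 := sq_nonneg _
  have h44 : ∑ b ∈ s, 4 * ip (A * u b - u b * A) (A * u b - u b * A)
      = 4 * ∑ b ∈ s, ip (A * u b - u b * A) (A * u b - u b * A) := by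
    rw [Finset.mul_sum]
  linarith [hb4, hbes, htr, h44]

end PartB

section PartC
open Kronecker

variable {n : ℕ}

def tau (n : ℕ) : Matrix (Fin n × Fin n) (Fin n × Fin n) ℝ :=
  Matrix.of fun z w => if z.1 = w.2 ∧ z.2 = w.1 then 1 else 0

lemma trace_kron_tau (A B : Matrix (Fin n) (Fin n) ℝ) :
    Matrix.trace ((A ⊗ₖ B) * tau n) = Matrix.trace (A * B) := by
  simp only [Matrix.trace, Matrix.diag, Matrix.mul_apply, tau, Matrix.of_apply,
    Matrix.kroneckerMap_apply, mul_ite, mul_one, mul_zero]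
  rw [Fintype.sum_prod_type]
  simp only [Fintype.sum_prod_type, ite_and]
  simp [Finset.sum_ite_eq, Finset.sum_ite_eq']

lemma key_scalar {p : ℕ} (w : Fin p → Fin p → ℝ)
    (hww : ∀ r s, ∑ a, w a r * w a s = if r = s then (1:ℝ) else 0)
    (x y : Fin p → ℝ) :
    ∑ a, (∑ r, w a r * x r) * (∑ s, w a s * y s) = ∑ r, x r * y r := by
  have h1 : ∀ a : Fin p, (∑ r, w a r * x r) * (∑ s, w a s * y s)
      = ∑ r, ∑ s, (w a r * x r) * (w a s * y s) := fun a => Finset.sum_mul_sum _ _ _ _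
  rw [Finset.sum_congr rfl fun a _ => h1 a]
  calc ∑ a, ∑ r, ∑ s, (w a r * x r) * (w a s * y s)
      = ∑ r, ∑ s, ∑ a, (w a r * x r) * (w a s * y s) := by
        rw [Finset.sum_comm]
        exact Finset.sum_congr rfl fun r _ => Finset.sum_comm
    _ = ∑ r, ∑ s, (x r * y s) * ∑ a, w a r * w a s := by
        refine Finset.sum_congr rfl fun r _ => Finset.sum_congr rfl fun s _ => ?_
        rw [Finset.mul_sum]
        exact Finset.sum_congr rfl fun a _ => by ring
    _ = ∑ r, ∑ s, (if r = s then x r * y s else 0) := by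
        refine Finset.sum_congr rfl fun r _ => Finset.sum_congr rfl fun s _ => ?_
        rw [hww r s]
        by_cases h : r = s <;> simp [h]
    _ = ∑ r, x r * y r := by
        refine Finset.sum_congr rfl fun r _ => ?_
        rw [Finset.sum_ite_eq]
        simp

lemma rhs_eq {p : ℕ} (D : Fin p → Matrix (Fin n) (Fin n) ℝ) :
    ∑ r, ∑ s, (Matrix.trace (D r * D s)) ^ 2
      = Matrix.trace ((∑ r, (D r) ⊗ₖ (D r)) * (∑ s, (D s) ⊗ₖ (D s))) := by
  rw [Finset.sum_mul]
  rw [Matrix.trace_sum]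
  refine (Finset.sum_congr rfl fun r _ => ?_).symm
  rw [Finset.mul_sum, Matrix.trace_sum]
  refine (Finset.sum_congr rfl fun s _ => ?_).symm
  rw [← Matrix.mul_kronecker_mul, Matrix.trace_kronecker]
  ring

lemma lhs_eq {p : ℕ} (D : Fin p → Matrix (Fin n) (Fin n) ℝ) (hD : ∀ r, (D r)ᵀ = D r) :
    ∑ r, ∑ s, Matrix.trace ((D r * D s - D s * D r) * (D r * D s - D s * D r)ᵀ)
      = 2 * Matrix.trace ((∑ r, D r * D r) * (∑ s, D s * D s))
        - 2 * Matrix.trace ((∑ r, (D r) ⊗ₖ (D r)) * ((∑ s, (D s) ⊗ₖ (D s)) * tau n)) := by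
  have per : ∀ r s, Matrix.trace ((D r * D s - D s * D r) * (D r * D s - D s * D r)ᵀ)
      = 2 * Matrix.trace ((D r * D r) * (D s * D s))
        - 2 * Matrix.trace (((D r) ⊗ₖ (D r)) * (((D s) ⊗ₖ (D s)) * tau n)) := by
    intro r s
    have hX : (D r)ᵀ = D r := hD r
    have hY : (D s)ᵀ = D s := hD s
    set X := D r
    set Y := D s
    have ht : (X * Y - Y * X)ᵀ = Y * X - X * Y := by
      rw [Matrix.transpose_sub, Matrix.transpose_mul, Matrix.transpose_mul, hX, hY]
    have hk : (X ⊗ₖ X) * ((Y ⊗ₖ Y) * tau n) = ((X * Y) ⊗ₖ (X * Y)) * tau n := by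
      rw [← Matrix.mul_assoc, ← Matrix.mul_kronecker_mul]
    rw [ht, hk, trace_kron_tau]
    have e0 : (X * Y - Y * X) * (Y * X - X * Y)
        = X*(Y*Y)*X - (X*Y)*(X*Y) - Y*(X*(Y*X)) + Y*(X*X)*Y := by
      noncomm_ring
    rw [e0]
    have e1 : Matrix.trace (X*(Y*Y)*X) = Matrix.trace (X*X*(Y*Y)) := by
      rw [Matrix.trace_mul_cycle]
    have e2 : Matrix.trace (Y*(X*(Y*X))) = Matrix.trace ((X*Y)*(X*Y)) := by
      rw [Matrix.trace_mul_comm]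
      congr 1
      noncomm_ring
    have e3 : Matrix.trace (Y*(X*X)*Y) = Matrix.trace (X*X*(Y*Y)) := by
      rw [Matrix.trace_mul_cycle, Matrix.trace_mul_comm]
    rw [Matrix.trace_add, Matrix.trace_sub, Matrix.trace_sub, e1, e2, e3]
    have e4 : Matrix.trace (X*X*(Y*Y)) = Matrix.trace ((X*X)*(Y*Y)) := rfl
    ring
  rw [Finset.sum_congr rfl fun r (_ : r ∈ Finset.univ) =>
    Finset.sum_congr rfl fun s (_ : s ∈ Finset.univ) => per r s]
  have hA : ∑ r, ∑ s, Matrix.trace (D r * D r * (D s * D s))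
      = Matrix.trace ((∑ r, D r * D r) * (∑ s, D s * D s)) := by
    rw [Finset.sum_mul, Matrix.trace_sum]
    refine (Finset.sum_congr rfl fun r _ => ?_)
    rw [Finset.mul_sum, Matrix.trace_sum]
  have hB : ∑ r, ∑ s, Matrix.trace ((D r ⊗ₖ D r) * ((D s ⊗ₖ D s) * tau n))
      = Matrix.trace ((∑ r, (D r) ⊗ₖ (D r)) * ((∑ s, (D s) ⊗ₖ (D s)) * tau n)) := by
    rw [Finset.sum_mul, Matrix.trace_sum]
    refine (Finset.sum_congr rfl fun r _ => ?_)
    rw [Finset.sum_mul, Finset.mul_sum, Matrix.trace_sum]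
  have hsplit : ∑ r, ∑ s, (2 * Matrix.trace (D r * D r * (D s * D s))
        - 2 * Matrix.trace ((D r ⊗ₖ D r) * ((D s ⊗ₖ D s) * tau n)))
      = 2 * (∑ r, ∑ s, Matrix.trace (D r * D r * (D s * D s)))
        - 2 * (∑ r, ∑ s, Matrix.trace ((D r ⊗ₖ D r) * ((D s ⊗ₖ D s) * tau n))) := by
    simp only [Finset.sum_sub_distrib, Finset.mul_sum]
  rw [hsplit, hA, hB]

end PartC

section Main
open Kronecker

lemma ip_neg_neg {n : ℕ} (X Y : Matrix (Fin n) (Fin n) ℝ) : ip (-X) (-Y) = ip X Y := by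
  simp [ip]

lemma main_orth {n p : ℕ} (C : Fin p → Matrix (Fin n) (Fin n) ℝ)
    (hs : ∀ a, (C a)ᵀ = C a)
    (horth : ∀ a b, a ≠ b → Matrix.trace (C a * C b) = 0) :
    ∑ a, ∑ b, Matrix.trace ((C a * C b - C b * C a) * (C a * C b - C b * C a)ᵀ)
      ≤ n * ∑ a, ∑ b, (Matrix.trace (C a * C b)) ^ 2 := by
  classical
  have hip : ∀ a b, Matrix.trace (C a * C b) = ip (C a) (C b) := fun a b =>
    trace_eq_ip _ _ (hs b)
  set lam : Fin p → ℝ := fun a => ip (C a) (C a) with hlam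
  have hlam0 : ∀ a, 0 ≤ lam a := fun a => ip_self_nonneg _
  have hrhs : ∑ a, ∑ b, (Matrix.trace (C a * C b)) ^ 2 = ∑ a, lam a ^ 2 := by
    refine Finset.sum_congr rfl fun a _ => ?_
    rw [Finset.sum_eq_single a]
    · rw [hip a a]
    · intro b _ hb
      rw [horth a b (Ne.symm hb)]
      simp
    · intro h; exact absurd (Finset.mem_univ a) h
  set cm : Fin p → Fin p → Matrix (Fin n) (Fin n) ℝ :=
    fun a b => C a * C b - C b * C a with hcm
  have hLip : ∑ a, ∑ b, Matrix.trace ((C a * C b - C b * C a) * (C a * C b - C b * C a)ᵀ)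
      = ∑ a, ∑ b, ip (cm a b) (cm a b) :=
    Finset.sum_congr rfl fun a _ => Finset.sum_congr rfl fun b _ =>
      trace_mul_transpose _ _
  rw [hLip, hrhs]
  set J : Finset (Fin p) := Finset.univ.filter (fun a => lam a ≠ 0) with hJ
  have hCz : ∀ a, a ∉ J → C a = 0 := by
    intro a ha
    rw [hJ] at ha
    simp only [Finset.mem_filter, Finset.mem_univ, true_and, not_not] at ha
    exact eq_zero_of_ip_self_eq_zero ha
  have hcmz : ∀ a b, a ∉ J ∨ b ∉ J → cm a b = 0 := by
    intro a b h
    rcases h with h | h <;> rw [hcm] <;> simp [hCz _ h]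
  have hipz : ip (0 : Matrix (Fin n) (Fin n) ℝ) 0 = 0 := by simp [ip]
  have hL1 : ∑ a, ∑ b, ip (cm a b) (cm a b) = ∑ a ∈ J, ∑ b ∈ J, ip (cm a b) (cm a b) := by
    rw [← Finset.sum_subset (Finset.subset_univ J)]
    · refine Finset.sum_congr rfl fun a ha => ?_
      rw [← Finset.sum_subset (Finset.subset_univ J)]
      intro b _ hb
      rw [hcmz a b (Or.inr hb), hipz]
    · intro a _ ha
      refine Finset.sum_eq_zero fun b _ => ?_
      rw [hcmz a b (Or.inl ha), hipz]
  have hlpos : ∀ x ∈ J, 0 < lam x := by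
    intro x hx
    rw [hJ] at hx
    simp only [Finset.mem_filter, Finset.mem_univ, true_and] at hx
    exact lt_of_le_of_ne (hlam0 x) (Ne.symm hx)
  set u : Fin p → Matrix (Fin n) (Fin n) ℝ := fun x => (Real.sqrt (lam x))⁻¹ • C x with hu
  have hsqrt : ∀ x ∈ J, Real.sqrt (lam x) ≠ 0 := fun x hx =>
    ne_of_gt (Real.sqrt_pos.mpr (hlpos x hx))
  have husymm : ∀ x ∈ J, (u x)ᵀ = u x := by
    intro x _
    rw [hu]
    simp only [Matrix.transpose_smul, hs]
  have hon : ∀ a ∈ J, ∀ b ∈ J, ip (u a) (u b) = if a = b then 1 else 0 := by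
    intro a ha b hb
    rw [hu]
    simp only
    rw [ip_smul_left, ip_smul_right]
    by_cases h : a = b
    · subst h
      simp only [if_pos rfl]
      have h0 : Real.sqrt (lam a) ≠ 0 := hsqrt a ha
      have hca : ip (C a) (C a) = lam a := rfl
      rw [hca, ← Real.mul_self_sqrt (hlam0 a)]
      field_simp
      rw [Real.sqrt_sq (Real.sqrt_nonneg _)]
      simp
    · rw [← hip a b, horth a b h]
      simp [h]
  have hCu : ∀ x ∈ J, C x = Real.sqrt (lam x) • u x := by
    intro x hx
    rw [hu]
    simp only
    rw [smul_inv_smul₀ (hsqrt x hx)]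
  set q : Fin p → Fin p → ℝ :=
    fun a b => ip (u a * u b - u b * u a) (u a * u b - u b * u a) with hq
  have hq0 : ∀ a b, 0 ≤ q a b := fun a b => ip_self_nonneg _
  have hqsymm : ∀ a b, q a b = q b a := by
    intro a b
    rw [hq]
    simp only
    rw [show u b * u a - u a * u b = -(u a * u b - u b * u a) from (neg_sub _ _).symm,
      ip_neg_neg]
  have hscale : ∀ a ∈ J, ∀ b ∈ J, ip (cm a b) (cm a b) = (lam a * lam b) * q a b := by
    intro a ha b hb
    have h1 : Real.sqrt (lam a) * Real.sqrt (lam a) = lam a := Real.mul_self_sqrt (hlam0 a)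
    have h2 : Real.sqrt (lam b) * Real.sqrt (lam b) = lam b := Real.mul_self_sqrt (hlam0 b)
    have e : cm a b = (Real.sqrt (lam a) * Real.sqrt (lam b)) • (u a * u b)
        - (Real.sqrt (lam b) * Real.sqrt (lam a)) • (u b * u a) := by
      rw [hcm]
      simp only
      rw [hCu a ha, hCu b hb,
        smul_mul_smul_comm (Real.sqrt (lam a)) (u a) (Real.sqrt (lam b)) (u b),
        smul_mul_smul_comm (Real.sqrt (lam b)) (u b) (Real.sqrt (lam a)) (u a)]
    have hexp : ∀ X Y : Matrix (Fin n) (Fin n) ℝ,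
        ip (X - Y) (X - Y) = ip X X - ip X Y - ip Y X + ip Y Y := by
      intro X Y
      rw [ip_sub_left, ip_sub_right, ip_sub_right]
      ring
    have hqe : q a b = ip (u a * u b) (u a * u b) - ip (u a * u b) (u b * u a)
        - ip (u b * u a) (u a * u b) + ip (u b * u a) (u b * u a) := hexp _ _
    rw [e, hexp, hqe]
    simp only [ip_smul_left, ip_smul_right]
    linear_combination ((ip (u a * u b) (u a * u b) - ip (u a * u b) (u b * u a)
        - ip (u b * u a) (u a * u b) + ip (u b * u a) (u b * u a))
          * (Real.sqrt (lam b) * Real.sqrt (lam b))) * h1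
      + ((ip (u a * u b) (u a * u b) - ip (u a * u b) (u b * u a)
        - ip (u b * u a) (u a * u b) + ip (u b * u a) (u b * u a)) * lam a) * h2
  have step1 : ∑ a ∈ J, ∑ b ∈ J, ip (cm a b) (cm a b)
      ≤ ∑ a ∈ J, ∑ b ∈ J, ((lam a ^ 2 + lam b ^ 2) / 2) * q a b := by
    refine Finset.sum_le_sum fun a ha => Finset.sum_le_sum fun b hb => ?_
    rw [hscale a ha b hb]
    have : lam a * lam b ≤ (lam a ^ 2 + lam b ^ 2) / 2 := by nlinarith [sq_nonneg (lam a - lam b)]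
    exact mul_le_mul_of_nonneg_right this (hq0 a b)
  have step2 : ∑ a ∈ J, ∑ b ∈ J, ((lam a ^ 2 + lam b ^ 2) / 2) * q a b
      = ∑ a ∈ J, lam a ^ 2 * ∑ b ∈ J, q a b := by
    have hsplit : ∀ a ∈ J, ∀ b ∈ J, ((lam a ^ 2 + lam b ^ 2) / 2) * q a b
        = (lam a ^ 2 * q a b) / 2 + (lam b ^ 2 * q a b) / 2 := by
      intro a _ b _; ring
    rw [Finset.sum_congr rfl fun a ha => Finset.sum_congr rfl fun b hb => hsplit a ha b hb]
    simp only [Finset.sum_add_distrib]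
    have hswap : ∑ a ∈ J, ∑ b ∈ J, (lam b ^ 2 * q a b) / 2
        = ∑ a ∈ J, ∑ b ∈ J, (lam a ^ 2 * q a b) / 2 := by
      rw [Finset.sum_comm]
      refine Finset.sum_congr rfl fun a _ => Finset.sum_congr rfl fun b _ => ?_
      rw [hqsymm b a]
    rw [hswap, ← Finset.sum_add_distrib]
    refine Finset.sum_congr rfl fun a _ => ?_
    rw [← Finset.sum_add_distrib, Finset.mul_sum]
    refine Finset.sum_congr rfl fun b _ => by ring
  have step3 : ∑ a ∈ J, lam a ^ 2 * ∑ b ∈ J, q a b ≤ ∑ a ∈ J, lam a ^ 2 * n := by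
    refine Finset.sum_le_sum fun a ha => ?_
    refine mul_le_mul_of_nonneg_left ?_ (sq_nonneg _)
    have hrb := row_bound (u a) J u (husymm a ha) husymm hon
    have hone : ip (u a) (u a) = 1 := by rw [hon a ha a ha]; simp
    rw [hone, mul_one] at hrb
    exact hrb
  have step4 : ∑ a ∈ J, lam a ^ 2 * n ≤ n * ∑ a, lam a ^ 2 := by
    have h1 : ∑ a ∈ J, lam a ^ 2 * (n : ℝ) = (n : ℝ) * ∑ a ∈ J, lam a ^ 2 := by
      rw [Finset.mul_sum]
      exact Finset.sum_congr rfl fun a _ => by ring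
    rw [h1]
    refine mul_le_mul_of_nonneg_left ?_ (Nat.cast_nonneg n)
    exact Finset.sum_le_sum_of_subset_of_nonneg (Finset.subset_univ J)
      fun a _ _ => sq_nonneg _
  rw [hL1]
  calc ∑ a ∈ J, ∑ b ∈ J, ip (cm a b) (cm a b)
      ≤ ∑ a ∈ J, ∑ b ∈ J, ((lam a ^ 2 + lam b ^ 2) / 2) * q a b := step1
    _ = ∑ a ∈ J, lam a ^ 2 * ∑ b ∈ J, q a b := step2
    _ ≤ ∑ a ∈ J, lam a ^ 2 * n := step3
    _ ≤ n * ∑ a, lam a ^ 2 := step4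

end Main

end ItohAux

open ItohAux Kronecker

theorem itoh_commutator_estimate (n p : ℕ) (hp : 1 ≤ p)
    (B : Fin p → Matrix (Fin n) (Fin n) ℝ) (hsymm : ∀ r, (B r).IsSymm) :
    ∑ r, ∑ s, Matrix.trace ((B r * B s - B s * B r) * (B r * B s - B s * B r)ᵀ) ≤
      n * ∑ r, ∑ s, (Matrix.trace (B r * B s)) ^ 2 := by
  classical
  have hBs : ∀ r, (B r)ᵀ = B r := fun r => hsymm r
  set G : Matrix (Fin p) (Fin p) ℝ := Matrix.of fun r s => Matrix.trace (B r * B s) with hGdef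
  have hGsymm : G.IsHermitian := by
    ext r s
    simp only [Matrix.conjTranspose_apply, hGdef, Matrix.of_apply, star_trivial]
    rw [Matrix.trace_mul_comm]
  set U : Matrix (Fin p) (Fin p) ℝ := (hGsymm.eigenvectorUnitary : Matrix (Fin p) (Fin p) ℝ)
    with hUdef
  have hU2 : U * star U = 1 := (Matrix.mem_unitaryGroup_iff).mp hGsymm.eigenvectorUnitary.2
  set w : Fin p → Fin p → ℝ := fun a r => U r a with hw
  have hww : ∀ r s, ∑ a, w a r * w a s = if r = s then (1:ℝ) else 0 := by
    intro r s
    have h1 : (U * star U) r s = (1 : Matrix (Fin p) (Fin p) ℝ) r s := by rw [hU2]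
    rw [Matrix.mul_apply] at h1
    simp only [Matrix.star_apply, star_trivial] at h1
    rw [hw]
    simp only
    rw [h1, Matrix.one_apply]
  set Cm : Fin p → Matrix (Fin n) (Fin n) ℝ := fun a => ∑ r, w a r • B r with hCm
  have hCsymm : ∀ a, (Cm a)ᵀ = Cm a := by
    intro a
    rw [hCm]
    simp only
    rw [Matrix.transpose_sum]
    exact Finset.sum_congr rfl fun r _ => by rw [Matrix.transpose_smul, hBs r]
  -- trace identity: trace (Cm a * Cm b) = (star U * G * U) a b
  have htr : ∀ a b, Matrix.trace (Cm a * Cm b) = (star U * G * U) a b := by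
    intro a b
    have h1 : Matrix.trace (Cm a * Cm b) = ∑ r, ∑ s, w a r * w b s * G r s := by
      rw [hCm]
      simp only
      rw [Finset.sum_mul, Matrix.trace_sum]
      refine Finset.sum_congr rfl fun r _ => ?_
      rw [Finset.mul_sum, Matrix.trace_sum]
      refine Finset.sum_congr rfl fun s _ => ?_
      rw [Matrix.smul_mul, Matrix.mul_smul, smul_smul, Matrix.trace_smul, smul_eq_mul, hGdef]
      rfl
    have h2 : (star U * G * U) a b = ∑ r, ∑ s, w a r * w b s * G r s := by
      rw [Matrix.mul_apply]
      have h3 : ∀ s, (star U * G) a s = ∑ r, w a r * G r s := by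
        intro s
        rw [Matrix.mul_apply]
        refine Finset.sum_congr rfl fun r _ => ?_
        simp only [Matrix.star_apply, star_trivial, hw]
      have h4 : ∀ s, (star U * G) a s * U s b = ∑ r, w a r * w b s * G r s := by
        intro s
        rw [h3 s, Finset.sum_mul]
        refine Finset.sum_congr rfl fun r _ => ?_
        rw [hw]
        simp only
        ring
      rw [Finset.sum_congr rfl fun s _ => h4 s, Finset.sum_comm]
    rw [h1, h2]
  have horthC : ∀ a b, a ≠ b → Matrix.trace (Cm a * Cm b) = 0 := by
    intro a b hab
    have hd : star U * G * U = Matrix.diagonal (RCLike.ofReal ∘ hGsymm.eigenvalues) :=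
      hGsymm.conjStarAlgAut_star_eigenvectorUnitary
    rw [htr a b, hd]
    simp [Matrix.diagonal_apply_ne _ hab]
  have hΦ : ∑ a, (Cm a) ⊗ₖ (Cm a) = ∑ r, (B r) ⊗ₖ (B r) := by
    ext z z'
    simp only [Matrix.sum_apply, Matrix.kroneckerMap_apply, hCm, Matrix.smul_apply,
      smul_eq_mul]
    exact key_scalar w hww (fun r => B r z.1 z'.1) (fun r => B r z.2 z'.2)
  have hS : ∑ a, Cm a * Cm a = ∑ r, B r * B r := by
    ext i j
    simp only [Matrix.sum_apply, Matrix.mul_apply, hCm, Matrix.smul_apply, smul_eq_mul]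
    rw [Finset.sum_comm]
    conv_rhs => rw [Finset.sum_comm]
    exact Finset.sum_congr rfl fun k _ =>
      key_scalar w hww (fun r => B r i k) (fun r => B r k j)
  rw [lhs_eq B hBs, rhs_eq B, ← hS, ← hΦ, ← rhs_eq Cm, ← lhs_eq Cm hCsymm]
  exact main_orth Cm hCsymm horthC
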